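/- For every real number x with 0 < x < π/2, the following double inequality holds: 3/8 < (1 - cos x / cos(x/2)) / x² < 4/π². -/

import Mathlib

open Real

lemma cos_half_sq (t : ℝ) : Real.cos t = 1 - 2 * Real.sin (t/2)^2 := by
  have h := Real.cos_two_mul (t/2)
  rw [(by ring : 2 * (t/2) = t)] at h
  have := Real.sin_sq_add_cos_sq (t/2)
  linarith

lemma cos_lb (t : ℝ) (ht : 0 < t) (ht' : t ≤ 0.79) :
    1 - t^2/2 + t^4/24 - t^5/100 ≤ Real.cos t := by
  have h2 : |t/2| ≤ 1 := by rw [abs_of_pos (by linarith)]; linarith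
  have hb := Real.sin_bound h2
  rw [abs_of_pos (by linarith : (0:ℝ) < t/2)] at hb
  obtain ⟨h1, h2'⟩ := abs_le.mp hb
  rw [cos_half_sq t]
  have hs0 : 0 < Real.sin (t/2) := Real.sin_pos_of_pos_of_lt_pi (by linarith) (by nlinarith [Real.pi_gt_three])
  have hA : Real.sin (t/2) ≤ t/2 - (t/2)^3/6 + (t/2)^4*(5/96) := by
    nlinarith [mul_le_mul_of_nonneg_left (by linarith : t/2 ≤ 1) (pow_nonneg (by linarith : (0:ℝ) ≤ t/2) 4)]
  have hsq : Real.sin (t/2)^2 ≤ (t/2 - (t/2)^3/6 + (t/2)^4*(5/96))^2 := by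
    nlinarith [hs0, hA]
  have hpoly : 2 * (t/2 - (t/2)^3/6 + (t/2)^4*(5/96))^2 ≤ t^2/2 - t^4/24 + t^5/100 := by
    nlinarith [pow_pos ht 5, pow_pos ht 6, pow_pos ht 7, pow_pos ht 8, sq_nonneg t, mul_pos (pow_pos ht 5) (sub_pos.mpr (lt_of_le_of_lt ht' (by norm_num : (0.79:ℝ) < 1)))]
  linarith

set_option maxHeartbeats 1000000 in
lemma Q_pos (t : ℝ) (ht : 0 < t) (ht' : t ≤ 0.7854) :
    0 < 1/4 - 173/800*t + 1/12*t^2 + 197/1200*t^3 - 5/96*t^4 - 167/3600*t^5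
      + 361/36000*t^6 + 5/1152*t^7 - 3739/2160000*t^8 - 77/691200*t^9
      + 149/1440000*t^10 - 173/12000000*t^11 := by
  have h := fun n => mul_nonneg (pow_nonneg ht.le n) (sub_nonneg.2 ht')
  nlinarith [h 1, h 2, h 3, h 4, h 5, h 6, h 7, h 8, h 9, h 10,
    pow_pos ht 2, pow_pos ht 3, pow_pos ht 4, pow_pos ht 5, pow_pos ht 6,
    pow_pos ht 7, pow_pos ht 8, pow_pos ht 9, pow_pos ht 10, pow_pos ht 11]

set_option maxHeartbeats 1000000 in
lemma M_pos (t : ℝ) (ht : 0 < t) (ht' : t ≤ 0.7854) :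
    0 < t * Real.sin t * (2 * Real.cos t ^ 2 + 1)
        + (4 * Real.cos t ^ 3 - 2 * Real.cos t ^ 2 - 2 * Real.cos t) := by
  have habs : |t| ≤ 1 := by rw [abs_of_pos ht]; linarith
  have hsb := Real.sin_bound habs
  rw [abs_of_pos ht] at hsb
  obtain ⟨hs1, hs2⟩ := abs_le.mp hsb
  have hclb : 1 - t^2/2 + t^4/24 - t^5/100 ≤ Real.cos t := cos_lb t ht (by linarith)
  have hc1 : Real.cos t ≤ 1 := Real.cos_le_one t
  set c := Real.cos t with hc
  set s := Real.sin t with hs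
  set L : ℝ := 1 - t^2/2 + t^4/24 - t^5/100 with hL
  clear_value c s L
  have hL7 : (7/10:ℝ) ≤ L := by
    rw [hL]; nlinarith [pow_pos ht 4, pow_pos ht 5, sq_nonneg t,
      mul_nonneg (pow_nonneg ht.le 4) (sub_nonneg.2 ht')]
  have hc7 : (7/10:ℝ) ≤ c := le_trans hL7 hclb
  have hL1 : L ≤ 1 := by
    rw [hL]
    nlinarith [pow_pos ht 4, pow_pos ht 5, sq_nonneg t,
      mul_nonneg (pow_nonneg ht.le 2) (sub_nonneg.2 ht')]
  have hslb0 : (0:ℝ) ≤ t - t^3/6 - t^4*(5/96) := by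
    nlinarith [pow_pos ht 3, pow_pos ht 4, mul_nonneg (pow_nonneg ht.le 3) (sub_nonneg.2 ht')]
  have hslb : t - t^3/6 - t^4*(5/96) ≤ s := by
    nlinarith [mul_le_mul_of_nonneg_left (by linarith : t ≤ 1) (pow_nonneg ht.le 4)]
  -- step 1
  have step1 : t * (t - t^3/6 - t^4*(5/96)) * (2*c^2+1) ≤ t * s * (2*c^2+1) := by
    have h1 : (0:ℝ) ≤ t * (2*c^2+1) := by positivity
    nlinarith [mul_le_mul_of_nonneg_left hslb h1]
  -- step 2 : monotone in c
  have step2 : t * (t - t^3/6 - t^4*(5/96)) * (2*L^2+1) + (4*L^3 - 2*L^2 - 2*L)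
      ≤ t * (t - t^3/6 - t^4*(5/96)) * (2*c^2+1) + (4*c^3 - 2*c^2 - 2*c) := by
    have hbr : (0:ℝ) ≤ 4*(c^2 + c*L + L^2) - 2*(c+L) - 2 := by
      nlinarith [sq_nonneg (c - 7/10), sq_nonneg (L - 7/10),
        mul_nonneg (sub_nonneg.2 hc7) (sub_nonneg.2 hL7)]
    have hcL0 : (0:ℝ) ≤ c + L := by linarith
    nlinarith [mul_nonneg (mul_nonneg ht.le hslb0)
        (mul_nonneg (sub_nonneg.2 hclb) hcL0),
      mul_nonneg (sub_nonneg.2 hclb) hbr]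
  -- step 3
  have key : t * (t - t^3/6 - t^4*(5/96)) * (2*L^2+1) + (4*L^3 - 2*L^2 - 2*L)
      = t^4 * (1/4 - 173/800*t + 1/12*t^2 + 197/1200*t^3 - 5/96*t^4 - 167/3600*t^5
      + 361/36000*t^6 + 5/1152*t^7 - 3739/2160000*t^8 - 77/691200*t^9
      + 149/1440000*t^10 - 173/12000000*t^11) := by
    rw [hL]; ring
  have step3 : 0 < t * (t - t^3/6 - t^4*(5/96)) * (2*L^2+1) + (4*L^3 - 2*L^2 - 2*L) := by
    rw [key]
    exact mul_pos (pow_pos ht 4) (Q_pos t ht ht')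
  linarith

noncomputable def phi (t : ℝ) : ℝ := (1 - 2 * Real.cos t + (Real.cos t)⁻¹) / t ^ 2

lemma phi_hasDerivAt (u : ℝ) (hu : 0 < u) (hu' : u < π/2) :
    HasDerivAt phi
      (((2 * Real.sin u + Real.sin u / Real.cos u ^ 2) * u ^ 2
        - (1 - 2 * Real.cos u + (Real.cos u)⁻¹) * (2 * u)) / (u ^ 2) ^ 2) u := by
  have hc : Real.cos u ≠ 0 :=
    ne_of_gt (Real.cos_pos_of_mem_Ioo ⟨by linarith [Real.pi_pos], hu'⟩)
  have hcos : HasDerivAt Real.cos (-Real.sin u) u := Real.hasDerivAt_cos u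
  have hinv : HasDerivAt (fun t => (Real.cos t)⁻¹) (-(-Real.sin u) / Real.cos u ^ 2) u :=
    hcos.inv hc
  have hP : HasDerivAt (fun t => 1 - 2 * Real.cos t + (Real.cos t)⁻¹)
      (2 * Real.sin u + Real.sin u / Real.cos u ^ 2) u := by
    have h1 : HasDerivAt (fun t => 1 - 2 * Real.cos t) (0 - 2 * (-Real.sin u)) u :=
      (hasDerivAt_const u (1:ℝ)).sub ((hcos.const_mul 2))
    have := h1.add hinv
    refine this.congr_deriv ?_
    ring
  have hq : HasDerivAt (fun t : ℝ => t ^ 2) (2 * u) u := by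
    simpa using hasDerivAt_pow 2 u
  have := hP.div hq (by positivity)
  exact this

lemma deriv_phi_pos (u : ℝ) (hu : 0 < u) (hu' : u < π/4) : 0 < deriv phi u := by
  have hupi : u < π/2 := by linarith [Real.pi_pos]
  have hc : 0 < Real.cos u :=
    Real.cos_pos_of_mem_Ioo ⟨by linarith [Real.pi_pos], hupi⟩
  rw [(phi_hasDerivAt u hu hupi).deriv]
  have hM := M_pos u hu (by nlinarith [Real.pi_lt_d6])
  have hnum : 0 < (2 * Real.sin u + Real.sin u / Real.cos u ^ 2) * u ^ 2
      - (1 - 2 * Real.cos u + (Real.cos u)⁻¹) * (2 * u) := by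
    have hkey : (2 * Real.sin u + Real.sin u / Real.cos u ^ 2) * u ^ 2
        - (1 - 2 * Real.cos u + (Real.cos u)⁻¹) * (2 * u)
        = u * (u * Real.sin u * (2 * Real.cos u ^ 2 + 1)
          + (4 * Real.cos u ^ 3 - 2 * Real.cos u ^ 2 - 2 * Real.cos u)) / Real.cos u ^ 2 := by
      field_simp
      ring
    rw [hkey]
    positivity
  positivity

lemma phi_lt (t : ℝ) (ht : 0 < t) (ht' : t < π/4) : phi t < phi (π/4) := by
  have hpi := Real.pi_pos
  have hmono : StrictMonoOn phi (Set.Icc t (π/4)) := by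
    apply strictMonoOn_of_deriv_pos (convex_Icc _ _)
    · apply ContinuousOn.div
      · apply ContinuousOn.add
        · exact (continuous_const.sub (continuous_const.mul Real.continuous_cos)).continuousOn
        · apply ContinuousOn.inv₀ Real.continuous_cos.continuousOn
          intro y hy
          simp only [Set.mem_Icc] at hy
          exact ne_of_gt (Real.cos_pos_of_mem_Ioo ⟨by linarith, by linarith⟩)
      · exact (continuous_pow 2).continuousOn
      · intro y hy
        simp only [Set.mem_Icc] at hy
        exact pow_ne_zero 2 (ne_of_gt (by linarith))
    · intro y hy
      rw [interior_Icc, Set.mem_Ioo] at hy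
      exact deriv_phi_pos y (lt_trans ht hy.1) hy.2
  exact hmono (Set.left_mem_Icc.2 (le_of_lt ht')) (Set.right_mem_Icc.2 (le_of_lt ht')) ht'

lemma phi_pi_div_four : phi (π/4) = 16 / π ^ 2 := by
  have hpi := Real.pi_pos
  have h2 : Real.sqrt 2 > 0 := by positivity
  have hsq : Real.sqrt 2 ^ 2 = 2 := Real.sq_sqrt (by norm_num)
  simp only [phi]
  rw [Real.cos_pi_div_four]
  rw [show (Real.sqrt 2 / 2)⁻¹ = Real.sqrt 2 from
    inv_eq_of_mul_eq_one_right (by nlinarith)]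
  have : 1 - 2 * (Real.sqrt 2 / 2) + Real.sqrt 2 = 1 := by ring
  rw [this]
  field_simp
  ring

lemma phi_gt (t : ℝ) (ht : 0 < t) (ht' : t < π/4) : 3/2 < phi t := by
  have hpi := Real.pi_lt_d6
  have ht1 : t < 0.7854 := by linarith
  have habs : |t| ≤ 1 := by rw [abs_of_pos ht]; linarith
  have hb := Real.cos_bound habs
  rw [abs_of_pos ht] at hb
  obtain ⟨h1, h2⟩ := abs_le.mp hb
  have hc : 0 < Real.cos t :=
    Real.cos_pos_of_mem_Ioo ⟨by linarith [Real.pi_pos], by linarith [Real.pi_pos]⟩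
  set c := Real.cos t with hcdef
  have hcub : c ≤ 1 - t^2/2 + t^4*(5/96) := by linarith
  have key : 3/2 * t^2 * c < 1 + c - 2*c^2 := by
    nlinarith [mul_pos hc hc, mul_nonneg (sub_nonneg.2 hcub) hc.le,
      mul_nonneg (sub_nonneg.2 hcub) (by positivity : (0:ℝ) ≤ 1 + t^2/2 + t^4*(5/48)),
      pow_pos ht 4, pow_pos ht 6, pow_pos ht 8,
      mul_pos (pow_pos ht 4) (sub_pos.2 (pow_lt_one₀ (le_of_lt ht) (by linarith) (by norm_num) : t^4 < 1))]
  have heq : 1 - 2*c + c⁻¹ = (1 + c - 2*c^2)/c := by field_simp; ring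
  rw [phi, ← hcdef, heq, lt_div_iff₀ (by positivity : (0:ℝ) < t^2), div_mul_eq_mul_div,
    lt_div_iff₀ hc]
  nlinarith [key]

theorem sandor_first_inequality (x : ℝ) (hx : 0 < x) (hx' : x < π / 2) :
    3 / 8 < (1 - Real.cos x / Real.cos (x / 2)) / x ^ 2 ∧
    (1 - Real.cos x / Real.cos (x / 2)) / x ^ 2 < 4 / π ^ 2 := by
  have hpi := Real.pi_pos
  have ht : 0 < x / 2 := by linarith
  have ht' : x / 2 < π / 4 := by linarith
  have hc : 0 < Real.cos (x / 2) :=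
    Real.cos_pos_of_mem_Ioo ⟨by linarith, by linarith⟩
  have hcosx : Real.cos x = 2 * Real.cos (x / 2) ^ 2 - 1 := by
    have h := Real.cos_two_mul (x / 2)
    rw [(by ring : 2 * (x / 2) = x)] at h
    exact h
  have heq : (1 - Real.cos x / Real.cos (x / 2)) / x ^ 2 = phi (x / 2) / 4 := by
    rw [hcosx, phi]
    have hx0 : x ≠ 0 := ne_of_gt hx
    have hc0 : Real.cos (x/2) ≠ 0 := ne_of_gt hc
    field_simp
    ring
  rw [heq]
  constructor
  · have := phi_gt (x/2) ht ht'
    linarith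
  · have h1 := phi_lt (x/2) ht ht'
    rw [phi_pi_div_four] at h1
    have hpi2 : (0:ℝ) < π ^ 2 := by positivity
    calc phi (x/2) / 4 < (16 / π ^ 2) / 4 := by linarith
    _ = 4 / π ^ 2 := by ring
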